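/- (Shelling lemma) Let $v \in \mathbb{R}^m$ with $\|v\|_2 \leq C$ and $\|v\|_1 = C\sqrt{k}$, where $k$ divides $m$. Then there exist $k$-sparse vectors $v[1], \ldots, v[m/k] \in \mathbb{R}^m$ with pairwise disjoint supports such that: (1) $v = \sum_{i=1}^{m/k} v[i]$; (2) $\sum_{i=1}^{m/k} \|v[i]\|_2 \leq 2C$; and (3) $\sum_{i=1}^{m/k} \|v[i]\|_\infty \leq \frac{1}{k}\|v\|_1 + \|v\|_\infty$. -/

import Mathlib

/-- The `ℓ^∞` norm of a vector in `ℝ^m`. -/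
noncomputable def linfty {m : ℕ} (x : Fin m → ℝ) : ℝ := ⨆ a, |x a|

open Finset in
open scoped Classical in
theorem stmt_9 (m k : ℕ) (hk : 0 < k) (hdvd : k ∣ m) (C : ℝ)
    (v : Fin m → ℝ)
    (h2 : Real.sqrt (∑ a, v a ^ 2) ≤ C)
    (h1 : ∑ a, |v a| = C * Real.sqrt k) :
    ∃ V : Fin (m / k) → Fin m → ℝ,
      (∀ i, (Finset.univ.filter fun a => V i a ≠ 0).card ≤ k) ∧
      (∀ i j, i ≠ j → ∀ a, V i a = 0 ∨ V j a = 0) ∧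
      (∀ a, v a = ∑ i, V i a) ∧
      (∑ i, Real.sqrt (∑ a, V i a ^ 2) ≤ 2 * C) ∧
      (∑ i, linfty (V i) ≤ (1 / k) * (∑ a, |v a|) + linfty v) := by
  classical
  have hC0 : 0 ≤ C := le_trans (Real.sqrt_nonneg _) h2
  have hk' : (0:ℝ) < k := by exact_mod_cast hk
  rcases Nat.eq_zero_or_pos m with hm | hm
  · subst hm
    have he : IsEmpty (Fin (0 / k)) := by rw [Nat.zero_div]; infer_instance
    refine ⟨fun _ _ => 0, fun i => he.elim i, fun i => he.elim i, fun a => a.elim0, ?_, ?_⟩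
    · simp; linarith
    · have hv : linfty v = 0 := by
        simp [linfty, Real.iSup_of_isEmpty]
      simp [hv, linfty]
  -- main case
  set q := m / k with hqdef
  have hkm : k ≤ m := Nat.le_of_dvd hm hdvd
  have hqk : q * k = m := Nat.div_mul_cancel hdvd
  have hq : 0 < q := Nat.div_pos hkm hk
  obtain ⟨p, hp⟩ : ∃ p, q = p + 1 := ⟨q - 1, by omega⟩
  haveI : Nonempty (Fin m) := ⟨⟨0, hm⟩⟩
  set σ : Equiv.Perm (Fin m) := Tuple.sort (fun a => -|v a|) with hσ
  set u : Fin m → ℝ := fun b => v (σ b) with hu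
  have hanti : ∀ b c : Fin m, b ≤ c → |u c| ≤ |u b| := by
    intro b c hbc
    have := Tuple.monotone_sort (fun a => -|v a|) hbc
    simp only [Function.comp_apply] at this
    simp only [hu, hσ]
    linarith
  -- blocks
  set W : ℕ → Fin m → ℝ := fun i b => if (b : ℕ) / k = i then u b else 0 with hW
  set Bl : ℕ → Finset (Fin m) := fun i => Finset.univ.filter (fun b : Fin m => (b : ℕ) / k = i)
    with hBl
  have hdivlt : ∀ b : Fin m, (b : ℕ) / k < q := fun b =>
    Nat.div_lt_div_of_lt_of_dvd hdvd b.2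
  have hcard : ∀ i, i < q → (Bl i).card = k := by
    intro i hi
    have hlt : ∀ j : Fin k, i * k + (j : ℕ) < m := by
      intro j
      have h2 : i * k + k ≤ q * k := by
        calc i * k + k = (i + 1) * k := by ring
        _ ≤ q * k := Nat.mul_le_mul_right k hi
      have := j.2
      omega
    have : (Bl i).card = (Finset.univ : Finset (Fin k)).card := by
      refine Finset.card_nbij' (fun b => (⟨(b : ℕ) % k, Nat.mod_lt _ hk⟩ : Fin k))
        (fun j => (⟨i * k + (j : ℕ), hlt j⟩ : Fin m)) (fun b _ => Finset.mem_univ _) ?_ ?_ ?_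
      · intro j _
        simp only [hBl, Finset.mem_coe, Finset.mem_filter, Finset.mem_univ, true_and]
        rw [Nat.add_comm, Nat.add_mul_div_right _ _ hk, Nat.div_eq_of_lt j.2, Nat.zero_add]
      · intro b hb
        simp only [hBl, Finset.mem_coe, Finset.mem_filter, Finset.mem_univ, true_and] at hb
        apply Fin.ext
        simp only
        conv_rhs => rw [← Nat.div_add_mod (b : ℕ) k]
        rw [hb, Nat.mul_comm]
      · intro j _
        apply Fin.ext
        simp only
        rw [Nat.add_comm, Nat.add_mul_mod_self_right, Nat.mod_eq_of_lt j.2]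
    simpa using this
  set V : Fin q → Fin m → ℝ := fun i a => W i.1 (σ.symm a) with hV
  have hVne : ∀ (i : Fin q) (a : Fin m), V i a ≠ 0 → ((σ.symm a : Fin m) : ℕ) / k = i.1 := by
    intro i a h
    by_contra hc
    apply h
    simp [hV, hW, hc]
  -- block ℓ¹ sums
  set S : ℕ → ℝ := fun i => ∑ c ∈ Bl i, |u c| with hS
  have hS0 : ∀ i, 0 ≤ S i := fun i => Finset.sum_nonneg (fun c _ => abs_nonneg _)
  have hA : ∀ i, ∀ b : Fin m, (b : ℕ) / k = i + 1 → (k : ℝ) * |u b| ≤ S i := by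
    intro i b hb
    have hi : i < q := by have := hdivlt b; omega
    have hle : ∀ c ∈ Bl i, |u b| ≤ |u c| := by
      intro c hc
      simp only [hBl, Finset.mem_filter, Finset.mem_univ, true_and] at hc
      apply hanti
      have h1 : (c : ℕ) < (i + 1) * k := by
        rw [← Nat.div_lt_iff_lt_mul hk, hc]; omega
      have h2 : (i + 1) * k ≤ (b : ℕ) := by
        rw [← Nat.le_div_iff_mul_le hk, hb]
      rw [Fin.le_def]; omega
    calc (k : ℝ) * |u b| = ∑ _c ∈ Bl i, |u b| := by
          rw [Finset.sum_const, hcard i hi, nsmul_eq_mul]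
    _ ≤ ∑ c ∈ Bl i, |u c| := Finset.sum_le_sum hle
  -- reindexing
  have hsum2 : ∀ i : Fin q, ∑ a, V i a ^ 2 = ∑ b ∈ Bl i.1, u b ^ 2 := by
    intro i
    have h1 : ∑ a, V i a ^ 2 = ∑ b, W i.1 b ^ 2 := Equiv.sum_comp σ.symm (fun b => W i.1 b ^ 2)
    rw [h1]
    have h2 : ∀ b : Fin m, W i.1 b ^ 2 = if (b : ℕ) / k = i.1 then u b ^ 2 else 0 := by
      intro b; simp only [hW]; split <;> simp
    simp only [h2, hBl]
    rw [Finset.sum_filter]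
  have htot : ∑ i ∈ Finset.range q, S i = ∑ a, |v a| := by
    have h3 : ∑ b, |u b| = ∑ a, |v a| := Equiv.sum_comp σ (fun a => |v a|)
    rw [← h3]
    simp only [hS, hBl]
    exact Finset.sum_fiberwise_of_maps_to (fun b _ => Finset.mem_range.mpr (hdivlt b)) _
  have hsk : (0:ℝ) < Real.sqrt k := Real.sqrt_pos.mpr hk'
  refine ⟨V, ?_, ?_, ?_, ?_, ?_⟩
  · -- sparsity
    intro i
    have : ((Finset.univ.filter fun a => V i a ≠ 0)).card ≤ (Finset.univ : Finset (Fin k)).card := by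
      apply Finset.card_le_card_of_injOn
        (fun a => (⟨((σ.symm a : Fin m) : ℕ) % k, Nat.mod_lt _ hk⟩ : Fin k))
      · intro a _; exact Finset.mem_univ _
      · intro a ha b hb hab
        simp only [Finset.coe_filter, Set.mem_setOf_eq, Finset.mem_univ, true_and] at ha hb
        have ha' := hVne i a ha
        have hb' := hVne i b hb
        have hmod : ((σ.symm a : Fin m) : ℕ) % k = ((σ.symm b : Fin m) : ℕ) % k := by
          simpa [Fin.ext_iff] using hab
        have hval : ((σ.symm a : Fin m) : ℕ) = ((σ.symm b : Fin m) : ℕ) := by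
          conv_lhs => rw [← Nat.div_add_mod ((σ.symm a : Fin m) : ℕ) k]
          conv_rhs => rw [← Nat.div_add_mod ((σ.symm b : Fin m) : ℕ) k]
          rw [ha', hb', hmod]
        exact σ.symm.injective (Fin.ext hval)
    simpa using this
  · -- disjointness
    intro i j hij a
    by_contra h
    push_neg at h
    exact hij (Fin.ext ((hVne i a h.1).symm.trans (hVne j a h.2)))
  · -- sum
    intro a
    have hva : v a = u (σ.symm a) := by simp [hu]
    rw [hva]
    set b := σ.symm a with hb
    have hib : ((b : ℕ) / k) < q := hdivlt b
    calc u b = ∑ i : Fin q, if (⟨(b : ℕ) / k, hib⟩ : Fin q) = i then u b else 0 := by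
          rw [Finset.sum_ite_eq]; simp
    _ = ∑ i : Fin q, V i a := by
          apply Finset.sum_congr rfl
          intro i _
          by_cases hcond : (b : ℕ) / k = i.1
          · simp [hV, hW, ← hb, hcond, Fin.ext_iff]
          · simp [hV, hW, ← hb, hcond, Fin.ext_iff]
  · -- ℓ² bound
    set g : ℕ → ℝ := fun i => Real.sqrt (∑ b ∈ Bl i, u b ^ 2) with hg
    have hmain : ∑ i : Fin q, Real.sqrt (∑ a, V i a ^ 2) = ∑ i ∈ Finset.range q, g i := by
      rw [← Fin.sum_univ_eq_sum_range g q]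
      exact Finset.sum_congr rfl (fun i _ => by rw [hg, hsum2 i])
    rw [hmain, hp, Finset.sum_range_succ']
    have hg0 : g 0 ≤ C := by
      apply le_trans _ h2
      apply Real.sqrt_le_sqrt
      have hsub : ∑ b ∈ Bl 0, u b ^ 2 ≤ ∑ b, u b ^ 2 :=
        Finset.sum_le_sum_of_subset_of_nonneg (Finset.filter_subset _ _)
          (fun b _ _ => sq_nonneg _)
      have h3 : ∑ b, u b ^ 2 = ∑ a, v a ^ 2 := Equiv.sum_comp σ (fun a => v a ^ 2)
      linarith
    have hgi : ∀ i ∈ Finset.range p, g (i + 1) ≤ S i / Real.sqrt k := by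
      intro i hi
      rw [Finset.mem_range] at hi
      have hiq : i + 1 < q := by omega
      have hbd : ∀ b ∈ Bl (i + 1), u b ^ 2 ≤ (S i / k) ^ 2 := by
        intro b hb
        simp only [hBl, Finset.mem_filter, Finset.mem_univ, true_and] at hb
        have h4 := hA i b hb
        have h5 : |u b| ≤ S i / k := by
          rw [le_div_iff₀ hk']; linarith
        calc u b ^ 2 = |u b| ^ 2 := (sq_abs _).symm
        _ ≤ (S i / k) ^ 2 := by
            apply pow_le_pow_left₀ (abs_nonneg _) h5
      have h6 : ∑ b ∈ Bl (i + 1), u b ^ 2 ≤ S i ^ 2 / k := by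
        calc ∑ b ∈ Bl (i + 1), u b ^ 2 ≤ ∑ _b ∈ Bl (i + 1), (S i / k) ^ 2 :=
              Finset.sum_le_sum hbd
        _ = (k : ℝ) * (S i / k) ^ 2 := by
              rw [Finset.sum_const, hcard (i + 1) hiq, nsmul_eq_mul]
        _ = S i ^ 2 / k := by field_simp
      calc g (i + 1) ≤ Real.sqrt (S i ^ 2 / k) := Real.sqrt_le_sqrt h6
      _ = S i / Real.sqrt k := by
            rw [Real.sqrt_div (sq_nonneg _), Real.sqrt_sq (hS0 i)]
    have hrest : ∑ i ∈ Finset.range p, g (i + 1) ≤ C := by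
      calc ∑ i ∈ Finset.range p, g (i + 1) ≤ ∑ i ∈ Finset.range p, S i / Real.sqrt k :=
            Finset.sum_le_sum hgi
      _ = (∑ i ∈ Finset.range p, S i) / Real.sqrt k := by rw [Finset.sum_div]
      _ ≤ (∑ i ∈ Finset.range q, S i) / Real.sqrt k := by
            apply div_le_div_of_nonneg_right _ hsk.le
            exact Finset.sum_le_sum_of_subset_of_nonneg
              (Finset.range_subset_range.mpr (by omega)) (fun i _ _ => hS0 i)
      _ = C * Real.sqrt k / Real.sqrt k := by rw [htot, h1]
      _ = C := by rw [mul_div_assoc, div_self (ne_of_gt hsk), mul_one]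
    linarith
  · -- ℓ∞ bound
    set h : ℕ → ℝ := fun i => ⨆ b, |W i b| with hh
    have hlinfV : ∀ i : Fin q, linfty (V i) = h i.1 := by
      intro i
      simp only [linfty, hV, hh]
      rw [← sSup_range, ← sSup_range]
      congr 1
      simpa [Function.comp_def] using σ.symm.surjective.range_comp (fun b => |W (i.1) b|)
    have hM0 : h 0 ≤ linfty v := by
      apply ciSup_le
      intro b
      have h7 : |W 0 b| ≤ |u b| := by
        simp only [hW]
        split
        · exact le_refl _
        · simp [abs_nonneg]
      apply le_trans h7
      have : |u b| = |v (σ b)| := by simp [hu]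
      rw [this, linfty]
      exact le_ciSup (f := fun a => |v a|) (Set.Finite.bddAbove (Set.finite_range _)) (σ b)
    have hMi : ∀ i ∈ Finset.range p, h (i + 1) ≤ S i / k := by
      intro i hi
      apply ciSup_le
      intro b
      simp only [hW]
      by_cases hbk : (b : ℕ) / k = i + 1
      · rw [if_pos hbk]
        have h4 := hA i b hbk
        rw [le_div_iff₀ hk']
        linarith
      · rw [if_neg hbk, abs_zero]
        exact div_nonneg (hS0 i) hk'.le
    have hmain : ∑ i : Fin q, linfty (V i) = ∑ i ∈ Finset.range q, h i := by
      rw [← Fin.sum_univ_eq_sum_range h q]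
      exact Finset.sum_congr rfl (fun i _ => hlinfV i)
    rw [hmain, hp, Finset.sum_range_succ']
    have hrest : ∑ i ∈ Finset.range p, h (i + 1) ≤ (1 / k) * (∑ a, |v a|) := by
      calc ∑ i ∈ Finset.range p, h (i + 1) ≤ ∑ i ∈ Finset.range p, S i / k :=
            Finset.sum_le_sum hMi
      _ = (∑ i ∈ Finset.range p, S i) / k := by rw [Finset.sum_div]
      _ ≤ (∑ i ∈ Finset.range q, S i) / k := by
            apply div_le_div_of_nonneg_right _ hk'.le
            exact Finset.sum_le_sum_of_subset_of_nonneg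
              (Finset.range_subset_range.mpr (by omega)) (fun i _ _ => hS0 i)
      _ = (1 / k) * (∑ a, |v a|) := by rw [htot]; ring
    linarith
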